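/- arXiv:2011.06911 — 4 statements merged into one kernel-verified Lean document; each statement's English description precedes it below -/
import Mathlib

section
/- Let E be a finite-dimensional complex inner product space (inner product conjugate-linear in the first slot), H : E → E a linear map, and ψ_0, …, ψ_{m-1} an orthonormal family in E whose span V satisfies H(V) ⊆ V. Let φ_0 ∈ V and define D_{jk} = ⟨ψ_j, H ψ_k⟩ and α_j(t) = ⟨ψ_j, exp((-i t)·H) φ_0⟩ for t ∈ ℝ. Then (a) exp((-i t)·H) φ_0 = ∑_j α_j(t) ψ_j for all t, and (b) each α_j is differentiable with α_j'(t) = -i ∑_k D_{jk} α_k(t). -/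
open scoped InnerProductSpace

/-- If the span of an orthonormal family `ψ` is invariant under `H`, the coordinates
`αⱼ(t) = ⟪ψⱼ, e^{-iHt} φ₀⟫` of the exact Schrödinger evolution of `φ₀` satisfy
(a) `e^{-iHt} φ₀ = ∑ⱼ αⱼ(t) ψⱼ` and (b) the QAS equation `αⱼ' = -i ∑ₖ Dⱼₖ αₖ`. -/
theorem stmt8 {E : Type*} [NormedAddCommGroup E] [InnerProductSpace ℂ E]
    [FiniteDimensional ℂ E] {m : ℕ}
    (H : E →ₗ[ℂ] E) (ψ : Fin m → E) (hortho : Orthonormal ℂ ψ)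
    (hinv : ∀ v ∈ Submodule.span ℂ (Set.range ψ), H v ∈ Submodule.span ℂ (Set.range ψ))
    (φ0 : E) (hφ0 : φ0 ∈ Submodule.span ℂ (Set.range ψ))
    (D : Matrix (Fin m) (Fin m) ℂ) (hD : ∀ j k, D j k = ⟪ψ j, H (ψ k)⟫_ℂ)
    (α : Fin m → ℝ → ℂ)
    (hα : ∀ j t, α j t = ⟪ψ j, (NormedSpace.exp (((-Complex.I) * (t : ℂ)) •
        (LinearMap.toContinuousLinearMap H))) φ0⟫_ℂ) :
    (∀ t : ℝ, (NormedSpace.exp (((-Complex.I) * (t : ℂ)) •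
        (LinearMap.toContinuousLinearMap H))) φ0 = ∑ j, α j t • ψ j) ∧
    (∀ j (t : ℝ), HasDerivAt (α j) ((-Complex.I) * ∑ k, D j k * α k t) t) := by
  classical
  set A := LinearMap.toContinuousLinearMap H with hAdef
  set V := Submodule.span ℂ (Set.range ψ) with hVdef
  have hAapp : ∀ x : E, A x = H x := fun x => rfl
  set u : ℝ → E := fun t => (NormedSpace.exp (((-Complex.I) * (t : ℂ)) • A)) φ0 with hudef
  -- powers stay in V
  have hpow : ∀ (n : ℕ), (A ^ n) φ0 ∈ V := by
    intro n
    induction n with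
    | zero => simpa using hφ0
    | succ n ih =>
      rw [pow_succ']
      have : (A * A ^ n) φ0 = A ((A ^ n) φ0) := rfl
      rw [this, hAapp]
      exact hinv _ ih
  -- exp(-itA) φ0 ∈ V
  have hmem : ∀ t : ℝ, u t ∈ V := by
    intro t
    have hsum : Summable fun n : ℕ =>
        ((n.factorial : ℂ)⁻¹) • (((-Complex.I) * (t : ℂ)) • A) ^ n :=
      NormedSpace.expSeries_summable' _
    have heval : u t = ∑' n : ℕ,
        (((n.factorial : ℂ)⁻¹) • (((-Complex.I) * (t : ℂ)) • A) ^ n) φ0 := by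
      rw [hudef]
      simp only [NormedSpace.exp_eq_tsum ℂ]
      exact (ContinuousLinearMap.apply ℂ E φ0).map_tsum hsum
    have hsum2 : Summable fun n : ℕ =>
        (((n.factorial : ℂ)⁻¹) • (((-Complex.I) * (t : ℂ)) • A) ^ n) φ0 :=
      hsum.map (ContinuousLinearMap.apply ℂ E φ0) (ContinuousLinearMap.apply ℂ E φ0).continuous
    have hterm : ∀ n : ℕ,
        (((n.factorial : ℂ)⁻¹) • (((-Complex.I) * (t : ℂ)) • A) ^ n) φ0 ∈ V := by
      intro n
      rw [smul_pow]
      simp only [ContinuousLinearMap.smul_apply]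
      exact V.smul_mem _ (V.smul_mem _ (hpow n))
    rw [heval]
    have hclosed : IsClosed (V : Set E) := V.closed_of_finiteDimensional
    refine hclosed.mem_of_tendsto hsum2.hasSum.tendsto_sum_nat ?_
    exact Filter.Eventually.of_forall fun n => V.sum_mem fun i _ => hterm i
  -- part (a)
  have ha : ∀ t : ℝ, u t = ∑ j, α j t • ψ j := by
    intro t
    obtain ⟨c, hc⟩ := (Submodule.mem_span_range_iff_exists_fun ℂ).mp (hmem t)
    have hcoef : ∀ j, α j t = c j := by
      intro j
      rw [hα j t]
      show ⟪ψ j, u t⟫_ℂ = c j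
      rw [← hc]
      exact hortho.inner_right_fintype c j
    rw [← hc]
    exact Finset.sum_congr rfl fun j _ => by rw [hcoef j]
  refine ⟨ha, ?_⟩
  intro j t
  -- derivative of s ↦ exp(s • A) at -I*t
  have h1 : HasDerivAt (fun s : ℂ => NormedSpace.exp (s • A))
      (A * NormedSpace.exp ((((-Complex.I) * (t : ℂ))) • A)) ((-Complex.I) * (t : ℂ)) :=
    hasDerivAt_exp_smul_const' A _
  have h2 : HasDerivAt (fun s : ℝ => (-Complex.I) * (s : ℂ)) (-Complex.I) t := by
    simpa using (Complex.ofRealCLM.hasDerivAt (x := t)).const_mul (-Complex.I)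
  have h3 : HasDerivAt (fun s : ℝ => NormedSpace.exp (((-Complex.I) * (s : ℂ)) • A))
      ((-Complex.I) • (A * NormedSpace.exp ((((-Complex.I) * (t : ℂ))) • A))) t :=
    by have := HasDerivAt.scomp t h1 h2; exact this
  -- apply evaluation at φ0
  have h4 : HasDerivAt u ((-Complex.I) • (A (u t))) t :=
    ((ContinuousLinearMap.apply ℂ E φ0).restrictScalars ℝ).hasFDerivAt.comp_hasDerivAt t h3
  -- apply inner product with ψ j
  have h5 : HasDerivAt (fun s => ⟪ψ j, u s⟫_ℂ) ⟪ψ j, (-Complex.I) • (A (u t))⟫_ℂ t :=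
    ((innerSL ℂ (ψ j)).restrictScalars ℝ).hasFDerivAt.comp_hasDerivAt t h4
  have hfun : α j = fun s => ⟪ψ j, u s⟫_ℂ := funext fun s => hα j s
  have hval : ⟪ψ j, (-Complex.I) • (A (u t))⟫_ℂ = (-Complex.I) * ∑ k, D j k * α k t := by
    rw [inner_smul_right]
    congr 1
    rw [hAapp, ha t, map_sum]
    rw [inner_sum]
    refine Finset.sum_congr rfl fun k _ => ?_
    rw [map_smul, inner_smul_right, hD j k, mul_comm]
  rw [hfun]
  exact hval ▸ h5
end

section
/- Let E be a finite-dimensional complex inner product space (inner product conjugate-linear in the first slot), H : E → E a self-adjoint linear map (⟨Hx, y⟩ = ⟨x, Hy⟩ for all x, y), and ψ : ℝ → E continuously differentiable with ψ'(τ) = -(H ψ(τ) - ⟨ψ(τ), H ψ(τ)⟩ · ψ(τ)) for all τ. If ‖ψ(0)‖ = 1, then ‖ψ(τ)‖ = 1 for all τ ∈ ℝ. -/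
open scoped InnerProductSpace

/-- Imaginary time evolution `ψ' = -(H - ⟨H⟩)ψ` with self-adjoint `H` preserves the norm:
if `‖ψ(0)‖ = 1` then `‖ψ(τ)‖ = 1` for all `τ`. -/
theorem stmt9 {E : Type*} [NormedAddCommGroup E] [InnerProductSpace ℂ E]
    [FiniteDimensional ℂ E]
    (H : E →ₗ[ℂ] E) (hH : ∀ x y : E, ⟪H x, y⟫_ℂ = ⟪x, H y⟫_ℂ)
    (ψ : ℝ → E)
    (hψ : ∀ τ : ℝ, HasDerivAt ψ (-(H (ψ τ) - ⟪ψ τ, H (ψ τ)⟫_ℂ • ψ τ)) τ)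
    (h0 : ‖ψ 0‖ = 1) :
    ∀ τ : ℝ, ‖ψ τ‖ = 1 := by
  letI : InnerProductSpace ℝ E := InnerProductSpace.complexToReal
  have hψcont : Continuous ψ := continuous_iff_continuousAt.2 fun τ => (hψ τ).continuousAt
  set a : ℝ → ℝ := fun τ => Complex.re ⟪ψ τ, H (ψ τ)⟫_ℂ with ha
  have hHcont : Continuous H := H.continuous_of_finiteDimensional
  have hacont : Continuous a :=
    Complex.continuous_re.comp (hψcont.inner (hHcont.comp hψcont))
  set f : ℝ → ℝ := fun τ => ⟪ψ τ, ψ τ⟫_ℝ with hfdef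
  have hre : ∀ x y : E, (⟪x, y⟫_ℝ : ℝ) = Complex.re ⟪x, y⟫_ℂ := fun x y =>
    real_inner_eq_re_inner ℂ x y
  have hfnorm : ∀ τ, f τ = ‖ψ τ‖ ^ 2 := fun τ => real_inner_self_eq_norm_sq _
  have hf : ∀ τ, HasDerivAt f (2 * a τ * (f τ - 1)) τ := by
    intro τ
    have h1 := (hψ τ).inner ℝ (hψ τ)
    convert h1 using 1
    case e'_4 => rfl
    case e'_5 => rfl
    have h2 : ⟪ψ τ, -(H (ψ τ) - ⟪ψ τ, H (ψ τ)⟫_ℂ • ψ τ)⟫_ℝ = a τ * (f τ - 1) := by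
      have hself : ⟪ψ τ, ψ τ⟫_ℂ = ((f τ : ℝ) : ℂ) := by
        apply Complex.ext
        · simpa [hfnorm τ] using (hre (ψ τ) (ψ τ)).symm
        · exact inner_self_im (𝕜 := ℂ) (ψ τ)
      rw [hre, inner_neg_right, inner_sub_right, inner_smul_right, hself]
      simp only [Complex.neg_re, Complex.sub_re, Complex.mul_re,
        Complex.ofReal_re, Complex.ofReal_im]
      ring
    rw [show ⟪-(H (ψ τ) - ⟪ψ τ, H (ψ τ)⟫_ℂ • ψ τ), ψ τ⟫_ℝ
        = ⟪ψ τ, -(H (ψ τ) - ⟪ψ τ, H (ψ τ)⟫_ℂ • ψ τ)⟫_ℝ from real_inner_comm _ _, h2]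
    ring
  -- integrating factor
  have h2acont : Continuous fun t => 2 * a t := continuous_const.mul hacont
  set A : ℝ → ℝ := fun τ => ∫ t in (0:ℝ)..τ, 2 * a t with hA
  have hA' : ∀ τ, HasDerivAt A (2 * a τ) τ := fun τ =>
    intervalIntegral.integral_hasDerivAt_right (h2acont.intervalIntegrable _ _)
      (h2acont.stronglyMeasurableAtFilter _ _) h2acont.continuousAt
  set G : ℝ → ℝ := fun τ => (f τ - 1) * Real.exp (-A τ) with hG
  have hG' : ∀ τ, HasDerivAt G 0 τ := by
    intro τ
    have := ((hf τ).sub_const 1).mul (((hA' τ).neg).exp)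
    convert this using 1
    case e'_4 => rfl
    case e'_5 => rfl
    case e'_8 => rfl
    ring
  have hGc : ∀ τ, G τ = G 0 :=
    fun τ => is_const_of_deriv_eq_zero (fun x => (hG' x).differentiableAt)
      (fun x => (hG' x).deriv) τ 0
  intro τ
  have hG0 : G 0 = 0 := by
    simp [hG, hfnorm 0, h0]
  have hGτ := hGc τ
  rw [hG0] at hGτ
  have hfτ : f τ = 1 := by
    rcases mul_eq_zero.1 hGτ with h | h
    · linarith
    · exact absurd h (Real.exp_ne_zero _)
  have hnorm : ‖ψ τ‖ ^ 2 = 1 := by rw [← hfnorm τ]; exact hfτ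
  nlinarith [norm_nonneg (ψ τ)]
end

section
/- Let E and D be Hermitian m×m complex matrices and let α : ℝ → ℂ^m be differentiable such that for every t: α(t)ᴴ E α(t) ≠ 0 and E · α'(t) = -(D · α(t) - ((α(t)ᴴ D α(t)) / (α(t)ᴴ E α(t))) · E · α(t)). Then the function t ↦ α(t)ᴴ E α(t) is constant on ℝ. -/
open Matrix

/-- Imaginary-time QAS evolution `E α' = -(D α - (αᴴDα/αᴴEα) E α)` with Hermitian `E`, `D`
keeps `αᴴ E α` constant. -/
theorem stmt10 {m : ℕ} (E D : Matrix (Fin m) (Fin m) ℂ)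
    (hE : E.IsHermitian) (hD : D.IsHermitian)
    (α : ℝ → (Fin m → ℂ)) (hα : Differentiable ℝ α)
    (hne : ∀ t : ℝ, star (α t) ⬝ᵥ E.mulVec (α t) ≠ 0)
    (heq : ∀ t : ℝ, E.mulVec (deriv α t) =
      -(D.mulVec (α t) - ((star (α t) ⬝ᵥ D.mulVec (α t)) /
        (star (α t) ⬝ᵥ E.mulVec (α t))) • E.mulVec (α t))) :
    ∀ s t : ℝ, star (α s) ⬝ᵥ E.mulVec (α s) = star (α t) ⬝ᵥ E.mulVec (α t) := by
  have hcomp : ∀ t (i : Fin m), HasDerivAt (fun t => α t i) (deriv α t i) t := fun t i =>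
    hasDerivAt_pi.mp (hα t).hasDerivAt i
  have key : ∀ t, HasDerivAt (fun t => star (α t) ⬝ᵥ E.mulVec (α t))
      (star (deriv α t) ⬝ᵥ E.mulVec (α t) + star (α t) ⬝ᵥ E.mulVec (deriv α t)) t := by
    intro t
    have h : ∀ i j : Fin m, HasDerivAt (fun t => star (α t i) * (E i j * α t j))
        (star (deriv α t i) * (E i j * α t j) + star (α t i) * (E i j * deriv α t j)) t :=
      fun i j => (hcomp t i).star.mul ((hcomp t j).const_mul (E i j))
    have hsum := HasDerivAt.fun_sum (u := Finset.univ) (fun i _ =>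
      HasDerivAt.fun_sum (u := Finset.univ) (fun j _ => h i j))
    convert hsum using 1
    · ext t
      simp [dotProduct, mulVec, Finset.mul_sum, mul_assoc, Pi.star_apply]
    · simp only [dotProduct, mulVec, Finset.mul_sum, Finset.sum_add_distrib, Pi.star_apply]
    · simp only [dotProduct, mulVec, Finset.mul_sum, Finset.sum_add_distrib, Pi.star_apply]
  have hzero2 : ∀ t, star (α t) ⬝ᵥ E.mulVec (deriv α t) = 0 := by
    intro t
    rw [heq t]
    have : star (α t) ⬝ᵥ (((star (α t) ⬝ᵥ D.mulVec (α t)) /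
        (star (α t) ⬝ᵥ E.mulVec (α t))) • E.mulVec (α t))
        = star (α t) ⬝ᵥ D.mulVec (α t) := by
      rw [dotProduct_smul, smul_eq_mul]
      exact div_mul_cancel₀ _ (hne t)
    simp [dotProduct_sub, this]
  have hzero1 : ∀ t, star (deriv α t) ⬝ᵥ E.mulVec (α t) = 0 := by
    intro t
    have hE' : Eᴴ = E := hE
    have : star (star (α t) ⬝ᵥ E.mulVec (deriv α t)) = star (deriv α t) ⬝ᵥ E.mulVec (α t) := by
      rw [star_dotProduct, star_star, star_mulVec, ← dotProduct_mulVec, hE']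
    rw [← this, hzero2 t, star_zero]
  have hderiv : ∀ t, deriv (fun t => star (α t) ⬝ᵥ E.mulVec (α t)) t = 0 := by
    intro t
    rw [(key t).deriv, hzero1 t, hzero2 t, add_zero]
  have hdiff : Differentiable ℝ (fun t => star (α t) ⬝ᵥ E.mulVec (α t)) :=
    fun t => (key t).differentiableAt
  intro s t
  exact is_const_of_deriv_eq_zero hdiff hderiv s t
end

section
/- Let E be a finite-dimensional complex inner product space (inner product conjugate-linear in the first slot), H : E → E a self-adjoint linear map, and ψ : ℝ → E differentiable at a point τ with ψ'(τ) = -(H ψ(τ) - ⟨ψ(τ), H ψ(τ)⟩ · ψ(τ)) and ‖ψ(τ)‖ = 1. Then the function t ↦ Re⟨ψ(t), H ψ(t)⟩ has derivative at τ equal to -2(‖H ψ(τ)‖² - (Re⟨ψ(τ), H ψ(τ)⟩)²), and this derivative is ≤ 0. -/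
open scoped InnerProductSpace

/-- Along imaginary time evolution `ψ' = -(H - ⟨H⟩)ψ` on a normalized state, the energy
`Re⟪ψ, Hψ⟫` has derivative `-2(‖Hψ‖² - (Re⟪ψ, Hψ⟫)²)`, which is nonpositive. -/
theorem stmt11 {E : Type*} [NormedAddCommGroup E] [InnerProductSpace ℂ E]
    [FiniteDimensional ℂ E]
    (H : E →ₗ[ℂ] E) (hH : ∀ x y : E, ⟪H x, y⟫_ℂ = ⟪x, H y⟫_ℂ)
    (ψ : ℝ → E) (τ : ℝ)
    (hψ : HasDerivAt ψ (-(H (ψ τ) - ⟪ψ τ, H (ψ τ)⟫_ℂ • ψ τ)) τ)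
    (hnorm : ‖ψ τ‖ = 1) :
    HasDerivAt (fun t => (⟪ψ t, H (ψ t)⟫_ℂ).re)
      (-2 * (‖H (ψ τ)‖ ^ 2 - ((⟪ψ τ, H (ψ τ)⟫_ℂ).re) ^ 2)) τ ∧
    -2 * (‖H (ψ τ)‖ ^ 2 - ((⟪ψ τ, H (ψ τ)⟫_ℂ).re) ^ 2) ≤ 0 := by
  set c : ℂ := ⟪ψ τ, H (ψ τ)⟫_ℂ with hc
  have hψ' : HasDerivAt (fun t => H (ψ t))
      (H (-(H (ψ τ) - c • ψ τ))) τ := ((H.toContinuousLinearMap.restrictScalars ℝ).hasFDerivAt.comp_hasDerivAt τ hψ)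
  have hd : HasDerivAt (fun t => ⟪ψ t, H (ψ t)⟫_ℂ)
      (⟪ψ τ, H (-(H (ψ τ) - c • ψ τ))⟫_ℂ + ⟪-(H (ψ τ) - c • ψ τ), H (ψ τ)⟫_ℂ) τ :=
    hψ.inner ℂ hψ'
  have hre : HasDerivAt (fun t => (⟪ψ t, H (ψ t)⟫_ℂ).re)
      ((⟪ψ τ, H (-(H (ψ τ) - c • ψ τ))⟫_ℂ + ⟪-(H (ψ τ) - c • ψ τ), H (ψ τ)⟫_ℂ).re) τ :=
    (Complex.reCLM.hasFDerivAt.comp_hasDerivAt τ hd)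
  -- c is real
  have hcreal : (starRingEnd ℂ) c = c := by
    rw [hc, inner_conj_symm]; exact hH _ _
  have hcim : c.im = 0 := by
    have := congrArg Complex.im hcreal
    simp [Complex.conj_im] at this
    linarith
  -- compute the derivative value
  have key : (⟪ψ τ, H (-(H (ψ τ) - c • ψ τ))⟫_ℂ + ⟪-(H (ψ τ) - c • ψ τ), H (ψ τ)⟫_ℂ).re
      = -2 * (‖H (ψ τ)‖ ^ 2 - c.re ^ 2) := by
    have h1 : ⟪ψ τ, H (-(H (ψ τ) - c • ψ τ))⟫_ℂ
        = ⟪H (ψ τ), -(H (ψ τ) - c • ψ τ)⟫_ℂ := (hH _ _).symm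
    have h2 : ⟪H (ψ τ), ψ τ⟫_ℂ = c := hH _ _
    rw [h1, inner_neg_right, inner_sub_right, inner_smul_right, h2,
      inner_neg_left, inner_sub_left, inner_smul_left, hcreal, ← hc]
    have hn : (⟪H (ψ τ), H (ψ τ)⟫_ℂ).re = ‖H (ψ τ)‖ ^ 2 := by
      have := inner_self_eq_norm_sq (𝕜 := ℂ) (H (ψ τ)); simpa using this
    have hni : (⟪H (ψ τ), H (ψ τ)⟫_ℂ).im = 0 := by
      exact inner_self_im (𝕜 := ℂ) (H (ψ τ))
    simp [Complex.add_re, Complex.neg_re, Complex.sub_re, Complex.mul_re, hcim, hni, hn]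
    rw [← Complex.ofReal_pow, Complex.ofReal_re]; ring
  refine ⟨key ▸ hre, ?_⟩
  -- Cauchy–Schwarz: |c| ≤ ‖ψ‖ ‖Hψ‖ = ‖Hψ‖
  have hcs : ‖c‖ ≤ ‖H (ψ τ)‖ := by
    have := norm_inner_le_norm (𝕜 := ℂ) (ψ τ) (H (ψ τ))
    rwa [hnorm, one_mul] at this
  have h1 : |c.re| ≤ ‖c‖ := Complex.abs_re_le_norm c
  have h2 : c.re ^ 2 ≤ ‖H (ψ τ)‖ ^ 2 := by
    have := sq_abs c.re
    nlinarith [abs_nonneg c.re, norm_nonneg c]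
  nlinarith
end
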